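/- In Z_123, let H = {1,10,16,37,100}, and for a subset S of Z_123 let HS = {h·s mod 123 : h ∈ H, s ∈ S}. Then the pair X = H{0,1,3,6,11,13,28,29,33,35,43,45,59}, Y = H{4,5,6,11,14,15,18,19,22,28,33,41,45} is a difference family in Z_123 with parameters (123; 61, 61; 60). In particular, cyclic Legendre pairs of length 123 exist. -/

import Mathlib

open Finset

/-- The number of ordered pairs `(a,b) ∈ X × X` with `a - b = s`. -/
def diffCount (X : Finset (ZMod 123)) (s : ZMod 123) : ℕ :=
  ((X ×ˢ X).filter (fun p => p.1 - p.2 = s)).card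

def H : Finset (ZMod 123) := {1, 10, 16, 37, 100}

def X : Finset (ZMod 123) := (H ×ˢ ({0, 1, 3, 6, 11, 13, 28, 29, 33, 35, 43, 45, 59} : Finset (ZMod 123))).image (fun p => p.1 * p.2)

def Y : Finset (ZMod 123) := (H ×ˢ ({4, 5, 6, 11, 14, 15, 18, 19, 22, 28, 33, 41, 45} : Finset (ZMod 123))).image (fun p => p.1 * p.2)

/-! ### Auxiliary machinery -/

def nX : List ℕ := [0, 1, 3, 6, 7, 10, 11, 13, 16, 28, 29, 30, 33, 34, 35, 36, 37, 38, 43, 44, 45, 48, 52, 53, 54, 56, 59, 60, 61, 65, 66, 68, 70, 71, 72, 73, 79, 81, 83, 84, 85, 89, 92, 94, 95, 96, 98, 99, 100, 102, 104, 105, 108, 110, 111, 112, 114, 115, 116, 118, 119]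
def nY : List ℕ := [4, 5, 6, 8, 11, 14, 15, 17, 18, 19, 22, 24, 25, 26, 27, 28, 31, 33, 34, 36, 38, 40, 41, 42, 45, 47, 50, 51, 52, 53, 55, 57, 58, 60, 62, 63, 64, 66, 67, 72, 76, 78, 79, 80, 81, 84, 88, 94, 96, 97, 99, 101, 102, 105, 106, 108, 109, 110, 114, 116, 117]

def mX : ℕ := 1151784627444273576719841028296748235
def mY : ℕ := 272401258530913418913860639697848688

lemma nX_nodup : (nX.map (Nat.cast : ℕ → ZMod 123)).Nodup := by decide
lemma nY_nodup : (nY.map (Nat.cast : ℕ → ZMod 123)).Nodup := by decide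

def XL : Finset (ZMod 123) := ⟨(nX.map (Nat.cast : ℕ → ZMod 123) : Multiset (ZMod 123)), nX_nodup⟩
def YL : Finset (ZMod 123) := ⟨(nY.map (Nat.cast : ℕ → ZMod 123) : Multiset (ZMod 123)), nY_nodup⟩

lemma hXL : X = XL := by decide
lemma hYL : Y = YL := by decide

lemma mem_map_cast (l : List ℕ) (hl : ∀ a ∈ l, a < 123) (x : ZMod 123) :
    x ∈ l.map (Nat.cast : ℕ → ZMod 123) ↔ x.val ∈ l := by
  simp only [List.mem_map]
  constructor
  · rintro ⟨a, ha, rfl⟩; rwa [ZMod.val_cast_of_lt (hl a ha)]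
  · intro h; exact ⟨x.val, h, by simp [ZMod.natCast_val, ZMod.cast_id]⟩

lemma nX_lt : ∀ a ∈ nX, a < 123 := by decide
lemma nY_lt : ∀ a ∈ nY, a < 123 := by decide

lemma diffCount_eq (A : Finset (ZMod 123)) (s : ZMod 123) :
    diffCount A s = (A.filter (fun x => x + s ∈ A)).card := by
  unfold diffCount
  apply Finset.card_bij (fun p _ => p.2)
  · intro p hp
    simp only [mem_filter, mem_product] at hp ⊢
    refine ⟨hp.1.2, ?_⟩
    have : p.2 + s = p.1 := by have h := hp.2; linear_combination -h
    rw [this]; exact hp.1.1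
  · intro p hp q hq h
    simp only [mem_filter, mem_product] at hp hq
    have h1 : p.1 = p.2 + s := by linear_combination hp.2
    have h2 : q.1 = q.2 + s := by linear_combination hq.2
    exact Prod.ext (by rw [h1, h2, h]) h
  · intro x hx
    simp only [mem_filter] at hx
    exact ⟨(x + s, x), by simp [mem_filter, mem_product, hx.1, hx.2], rfl⟩

lemma maskX : ∀ b < 123, (b ∈ nX ↔ mX >>> b % 2 = 1) := by decide
lemma maskY : ∀ b < 123, (b ∈ nY ↔ mY >>> b % 2 = 1) := by decide

lemma filter_card_list (l : List ℕ) (h : (l.map (Nat.cast : ℕ → ZMod 123)).Nodup)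
    (p : ZMod 123 → Prop) [DecidablePred p] :
    ((⟨(l.map (Nat.cast : ℕ → ZMod 123) : Multiset (ZMod 123)), h⟩ : Finset (ZMod 123)).filter p).card
      = l.countP (fun a : ℕ => decide (p (Nat.cast a))) := by
  change Multiset.card (Multiset.filter p ↑(l.map (Nat.cast : ℕ → ZMod 123))) = _
  rw [Multiset.filter_coe, Multiset.coe_card, ← List.countP_eq_length_filter, List.countP_map]
  rfl

lemma val_add_cast (a : ℕ) (s : ZMod 123) : ((a : ZMod 123) + s).val = (a + s.val) % 123 := by
  conv_lhs => rw [show s = ((s.val : ℕ) : ZMod 123) by rw [ZMod.natCast_val, ZMod.cast_id]]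
  rw [← Nat.cast_add, ZMod.val_natCast]

lemma mem_XL (x : ZMod 123) : x ∈ XL ↔ x.val ∈ nX := by
  show x ∈ (nX.map (Nat.cast : ℕ → ZMod 123) : Multiset (ZMod 123)) ↔ _
  rw [Multiset.mem_coe]
  exact mem_map_cast nX nX_lt x

lemma dcX (s : ZMod 123) :
    diffCount XL s = nX.countP (fun a => mX >>> ((a + s.val) % 123) % 2 == 1) := by
  rw [diffCount_eq]
  show ((⟨(nX.map (Nat.cast : ℕ → ZMod 123) : Multiset (ZMod 123)), nX_nodup⟩ : Finset (ZMod 123)).filter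
    (fun x => x + s ∈ XL)).card = _
  rw [filter_card_list]
  apply List.countP_congr
  intro a ha
  have hmem : ((a : ZMod 123) + s ∈ XL) ↔ (mX >>> ((a + s.val) % 123) % 2 = 1) := by
    rw [mem_XL, val_add_cast]
    exact maskX _ (Nat.mod_lt _ (by norm_num))
  simp only [decide_eq_true_eq, beq_iff_eq, hmem]

lemma mem_YL (x : ZMod 123) : x ∈ YL ↔ x.val ∈ nY := by
  show x ∈ (nY.map (Nat.cast : ℕ → ZMod 123) : Multiset (ZMod 123)) ↔ _
  rw [Multiset.mem_coe]
  exact mem_map_cast nY nY_lt x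

lemma dcY (s : ZMod 123) :
    diffCount YL s = nY.countP (fun a => mY >>> ((a + s.val) % 123) % 2 == 1) := by
  rw [diffCount_eq]
  show ((⟨(nY.map (Nat.cast : ℕ → ZMod 123) : Multiset (ZMod 123)), nY_nodup⟩ : Finset (ZMod 123)).filter
    (fun x => x + s ∈ YL)).card = _
  rw [filter_card_list]
  apply List.countP_congr
  intro a ha
  have hmem : ((a : ZMod 123) + s ∈ YL) ↔ (mY >>> ((a + s.val) % 123) % 2 = 1) := by
    rw [mem_YL, val_add_cast]
    exact maskY _ (Nat.mod_lt _ (by norm_num))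
  simp only [decide_eq_true_eq, beq_iff_eq, hmem]

set_option maxRecDepth 100000 in
lemma chk : ((List.range 123).all (fun t => (t == 0) ||
    ((nX.countP (fun a => mX >>> ((a + t) % 123) % 2 == 1)
      + nY.countP (fun a => mY >>> ((a + t) % 123) % 2 == 1)) == 60))) = true := by decide +kernel

lemma part3 : ∀ s : ZMod 123, s ≠ 0 → diffCount X s + diffCount Y s = 60 := by
  intro s hs
  rw [hXL, hYL, dcX, dcY]
  have h := (List.all_eq_true.mp chk) s.val (List.mem_range.mpr s.val_lt)
  rw [Bool.or_eq_true, beq_iff_eq, beq_iff_eq] at h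
  rcases h with h | h
  · exact absurd ((ZMod.val_eq_zero s).mp h) hs
  · exact h

lemma cardX : X.card = 61 := by decide
lemma cardY : Y.card = 61 := by decide

lemma corr (A : Finset (ZMod 123)) (s : ZMod 123) :
    (∑ x : ZMod 123, (if x ∈ A then (1:ℤ) else -1) * (if x + s ∈ A then (1:ℤ) else -1))
      = 123 - 4 * A.card + 4 * (diffCount A s) := by
  rw [diffCount_eq]
  have key : ∀ x : ZMod 123,
      (if x ∈ A then (1:ℤ) else -1) * (if x + s ∈ A then (1:ℤ) else -1)
      = 4 * (if x ∈ A ∧ x + s ∈ A then (1:ℤ) else 0)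
        - 2 * (if x ∈ A then (1:ℤ) else 0) - 2 * (if x + s ∈ A then (1:ℤ) else 0) + 1 := by
    intro x
    by_cases h1 : x ∈ A <;> by_cases h2 : x + s ∈ A <;> simp [h1, h2]
  simp_rw [key]
  rw [Finset.sum_add_distrib, Finset.sum_sub_distrib, Finset.sum_sub_distrib]
  have e1 : (∑ x : ZMod 123, (4 : ℤ) * (if x ∈ A ∧ x + s ∈ A then (1:ℤ) else 0))
      = 4 * (A.filter (fun x => x + s ∈ A)).card := by
    rw [← Finset.mul_sum]
    congr 1
    rw [Finset.sum_boole]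
    congr 2
    ext x
    simp [mem_filter]
  have e2 : (∑ x : ZMod 123, (2:ℤ) * (if x ∈ A then (1:ℤ) else 0)) = 2 * A.card := by
    rw [← Finset.mul_sum, Finset.sum_boole]
    congr 2
    simp [Finset.filter_mem_eq_inter]
  have e3 : (∑ x : ZMod 123, (2:ℤ) * (if x + s ∈ A then (1:ℤ) else 0)) = 2 * A.card := by
    rw [← Finset.mul_sum]
    rw [show (∑ x : ZMod 123, if x + s ∈ A then (1:ℤ) else 0) = ∑ x : ZMod 123, if x ∈ A then (1:ℤ) else 0 from
      Fintype.sum_bijective (fun x => x + s) (AddGroup.addRight_bijective s) _ _ (fun x => rfl)]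
    rw [Finset.sum_boole]
    congr 2
    simp [Finset.filter_mem_eq_inter]
  rw [e1, e2, e3]
  simp [Finset.card_univ]
  ring

theorem stmt_8 :
    X.card = 61 ∧ Y.card = 61 ∧
    (∀ s : ZMod 123, s ≠ 0 → diffCount X s + diffCount Y s = 60) ∧
    ∃ f g : ZMod 123 → ℤ,
      (∀ x, f x = 1 ∨ f x = -1) ∧ (∀ x, g x = 1 ∨ g x = -1) ∧
      ∀ s : ZMod 123, s ≠ 0 →
        (∑ x : ZMod 123, f x * f (x + s)) + (∑ x : ZMod 123, g x * g (x + s)) = -2 := by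
  refine ⟨cardX, cardY, part3, fun x => if x ∈ X then 1 else -1, fun x => if x ∈ Y then 1 else -1,
    fun x => by by_cases h : x ∈ X <;> simp [h], fun x => by by_cases h : x ∈ Y <;> simp [h], ?_⟩
  intro s hs
  rw [corr X s, corr Y s, cardX, cardY]
  have h3 := part3 s hs
  have : (diffCount X s : ℤ) + (diffCount Y s : ℤ) = 60 := by exact_mod_cast h3
  push_cast
  linarith
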